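/- For a ↓-chain-compact semitopological semilattice X the following conditions are equivalent: (1) the weak• topology 𝒵_X of X is Hausdorff; (2) X is 𝒵τ-separated, i.e., any distinct points x, y ∈ X have disjoint neighborhoods O_x ∈ 𝒵_X and O_y in the original topology of X; (3) X is a V-semilattice satisfying the separation axiom T1. -/

import Mathlib

open Set TopologicalSpace

variable (X : Type*)

/-- The weak• topology `𝒵_X` of a topologized semilattice: generated by the subbase of
complements of closed subsemilattices. -/
def zarTop [SemilatticeInf X] [TopologicalSpace X] : TopologicalSpace X :=
  TopologicalSpace.generateFrom
    {U : Set X | ∃ S : Set X, IsClosed S ∧ (∀ a ∈ S, ∀ b ∈ S, a ⊓ b ∈ S) ∧ U = Sᶜ}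

/-- The weak° topology `η_X` of a topologized semilattice: generated by the base of
open subsemilattices. -/
def etaTop [SemilatticeInf X] [TopologicalSpace X] : TopologicalSpace X :=
  TopologicalSpace.generateFrom
    {U : Set X | IsOpen U ∧ ∀ a ∈ U, ∀ b ∈ U, a ⊓ b ∈ U}

/-- The `𝕀`-weak topology `𝒲_X`: generated by the subbase of preimages of open subsets of
`[0,1]` under continuous homomorphisms `h : X → ([0,1], min)`. -/
def iweakTop [SemilatticeInf X] [TopologicalSpace X] : TopologicalSpace X :=
  TopologicalSpace.generateFrom
    {V : Set X | ∃ h : X → unitInterval, Continuous h ∧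
      (∀ x y : X, h (x ⊓ y) = min (h x) (h y)) ∧
      ∃ U : Set unitInterval, IsOpen U ∧ V = h ⁻¹' U}

/-- `U` is Scott-open: `U = ↑U` and every nonempty up-directed set whose supremum lies in
`U` meets `U`. -/
def ScottOpen [Preorder X] (U : Set X) : Prop :=
  IsUpperSet U ∧ ∀ D : Set X, D.Nonempty → DirectedOn (· ≤ ·) D →
    ∀ a : X, IsLUB D a → a ∈ U → (D ∩ U).Nonempty

/-- The Lawson topology `Λ_X`: generated by the subbase consisting of Scott-open sets and
complements of upper sets `↑x`. -/
def lawsonTop [Preorder X] : TopologicalSpace X :=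
  TopologicalSpace.generateFrom
    ({U : Set X | ScottOpen X U} ∪ {V : Set X | ∃ x : X, V = (Set.Ici x)ᶜ})

/-- The interval topology: generated by the subbase of complements of the sets `↑x`, `↓x`. -/
def intervalTop [Preorder X] : TopologicalSpace X :=
  TopologicalSpace.generateFrom
    ({V : Set X | ∃ x : X, V = (Set.Ici x)ᶜ} ∪ {V : Set X | ∃ x : X, V = (Set.Iic x)ᶜ})

/-- A topologized semilattice is complete if every nonempty chain `C` has an infimum and a
supremum in `X`, both belonging to the closure of `C`. -/
def CompleteTS [SemilatticeInf X] [TopologicalSpace X] : Prop :=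
  ∀ C : Set X, C.Nonempty → IsChain (· ≤ ·) C →
    (∃ a : X, IsGLB C a ∧ a ∈ closure C) ∧ (∃ b : X, IsLUB C b ∧ b ∈ closure C)


section StmtAux

open Filter Topology

variable {Y : Type*} [SemilatticeInf Y] [TopologicalSpace Y]

private lemma contR (hsemi : ∀ a : Y, Continuous fun t => a ⊓ t) (a : Y) :
    Continuous fun t : Y => t ⊓ a := by
  simpa only [inf_comm] using hsemi a

private lemma isClosed_Ici_t1 (hsemi : ∀ a : Y, Continuous fun t => a ⊓ t) [T1Space Y] (a : Y) :
    IsClosed (Ici a) := by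
  have h : Ici a = (fun t => a ⊓ t) ⁻¹' {a} := by
    ext t
    simp [inf_eq_left]
  rw [h]
  exact isClosed_singleton.preimage (hsemi a)

private lemma isClosed_Iic_t2 (hsemi : ∀ a : Y, Continuous fun t => a ⊓ t) [T2Space Y] (a : Y) :
    IsClosed (Iic a) := by
  have h : Iic a = {t : Y | t ⊓ a = t} := by
    ext t
    simp [inf_eq_left]
  rw [h]
  exact isClosed_eq (contR hsemi a) continuous_id

/-- From `hdcc`, any closed chain lying below some point is compact (as a subset of `Y`). -/
private lemma compact_of_closed_chain
    (hdcc : ∀ x : Y, ∀ C : Set (Set.Iic x), IsClosed C → IsChain (· ≤ ·) C → IsCompact C)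
    {w : Y} {C : Set Y} (hCw : C ⊆ Iic w) (hcl : IsClosed C) (hch : IsChain (· ≤ ·) C) :
    IsCompact C := by
  have h1 : IsCompact ((Subtype.val : Set.Iic w → Y) ⁻¹' C) := by
    apply hdcc w
    · exact hcl.preimage continuous_subtype_val
    · intro a ha b hb hab
      exact hch ha hb (fun h' => hab (Subtype.ext h'))
  have h2 : C = (Subtype.val : Set.Iic w → Y) '' (Subtype.val ⁻¹' C) := by
    rw [Subtype.image_preimage_coe]
    exact (inter_eq_right.mpr hCw).symm
  rw [h2]
  exact h1.image continuous_subtype_val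

/-- A nonempty compact closed chain has a least element. -/
private lemma chain_compact_min (hsemi : ∀ a : Y, Continuous fun t => a ⊓ t) [T2Space Y]
    {C : Set Y} (hcomp : IsCompact C) (hcl : IsClosed C) (hch : IsChain (· ≤ ·) C)
    (hne : C.Nonempty) : ∃ m ∈ C, ∀ c ∈ C, m ≤ c := by
  haveI : Nonempty C := hne.to_subtype
  have key : (⋂ c : C, C ∩ Iic c.1).Nonempty := by
    apply IsCompact.nonempty_iInter_of_directed_nonempty_isCompact_isClosed
    · intro c d
      rcases eq_or_ne c.1 d.1 with h | h
      · exact ⟨c, Subset.rfl, by simp only [h]; exact Subset.rfl⟩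
      rcases hch c.2 d.2 h with h' | h'
      · exact ⟨c, Subset.rfl, inter_subset_inter_right _ (Iic_subset_Iic.2 h')⟩
      · exact ⟨d, inter_subset_inter_right _ (Iic_subset_Iic.2 h'), Subset.rfl⟩
    · exact fun c => ⟨c.1, c.2, self_mem_Iic⟩
    · exact fun c => hcomp.of_isClosed_subset (hcl.inter (isClosed_Iic_t2 hsemi _))
        inter_subset_left
    · exact fun c => hcl.inter (isClosed_Iic_t2 hsemi _)
  obtain ⟨m, hm⟩ := key
  have hmC : m ∈ C := (mem_iInter.1 hm (Classical.arbitrary C)).1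
  exact ⟨m, hmC, fun c hc => (mem_iInter.1 hm ⟨c, hc⟩).2⟩

/-- A nonempty compact closed chain has a greatest element. -/
private lemma chain_compact_max (hsemi : ∀ a : Y, Continuous fun t => a ⊓ t) [T2Space Y]
    {C : Set Y} (hcomp : IsCompact C) (hcl : IsClosed C) (hch : IsChain (· ≤ ·) C)
    (hne : C.Nonempty) : ∃ m ∈ C, ∀ c ∈ C, c ≤ m := by
  haveI : Nonempty C := hne.to_subtype
  have key : (⋂ c : C, C ∩ Ici c.1).Nonempty := by
    apply IsCompact.nonempty_iInter_of_directed_nonempty_isCompact_isClosed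
    · intro c d
      rcases eq_or_ne c.1 d.1 with h | h
      · exact ⟨c, Subset.rfl, by simp only [h]; exact Subset.rfl⟩
      rcases hch c.2 d.2 h with h' | h'
      · exact ⟨d, inter_subset_inter_right _ (Ici_subset_Ici.2 h'), Subset.rfl⟩
      · exact ⟨c, Subset.rfl, inter_subset_inter_right _ (Ici_subset_Ici.2 h')⟩
    · exact fun c => ⟨c.1, c.2, self_mem_Ici⟩
    · exact fun c => hcomp.of_isClosed_subset (hcl.inter (isClosed_Ici_t1 hsemi _))
        inter_subset_left
    · exact fun c => hcl.inter (isClosed_Ici_t1 hsemi _)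
  obtain ⟨m, hm⟩ := key
  have hmC : m ∈ C := (mem_iInter.1 hm (Classical.arbitrary C)).1
  exact ⟨m, hmC, fun c hc => (mem_iInter.1 hm ⟨c, hc⟩).2⟩

/-- In a Hausdorff semitopological semilattice, the closure of a chain is a chain. -/
private lemma isChain_closure (hsemi : ∀ a : Y, Continuous fun t => a ⊓ t) [T2Space Y]
    {C : Set Y} (hch : IsChain (· ≤ ·) C) : IsChain (· ≤ ·) (closure C) := by
  have step : ∀ a ∈ closure C, ∀ c ∈ C, a ≤ c ∨ c ≤ a := by
    intro a ha c hc
    have hsub : C ⊆ Iic c ∪ Ici c := by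
      intro d hd
      rcases eq_or_ne d c with rfl | hne
      · exact Or.inl le_rfl
      exact hch hd hc hne
    exact closure_minimal hsub ((isClosed_Iic_t2 hsemi c).union (isClosed_Ici_t1 hsemi c)) ha
  intro a ha b hb _
  have hsub : C ⊆ Iic a ∪ Ici a := fun c hc => (step a ha c hc).symm
  have hb' := closure_minimal hsub
    ((isClosed_Iic_t2 hsemi a).union (isClosed_Ici_t1 hsemi a)) hb
  exact hb'.symm

/-- A nonempty chain bounded above by `w` has a least upper bound lying in its closure. -/
private lemma chain_sup (hsemi : ∀ a : Y, Continuous fun t => a ⊓ t)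
    (hdcc : ∀ x : Y, ∀ C : Set (Set.Iic x), IsClosed C → IsChain (· ≤ ·) C → IsCompact C)
    [T2Space Y] {w : Y} {C : Set Y} (hCw : C ⊆ Iic w) (hch : IsChain (· ≤ ·) C)
    (hne : C.Nonempty) :
    ∃ s, s ∈ closure C ∧ (∀ c ∈ C, c ≤ s) ∧ ∀ b, (∀ c ∈ C, c ≤ b) → s ≤ b := by
  have hclch := isChain_closure hsemi hch
  have hclw : closure C ⊆ Iic w := closure_minimal hCw (isClosed_Iic_t2 hsemi w)
  have hcomp := compact_of_closed_chain hdcc hclw isClosed_closure hclch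
  obtain ⟨s, hs, hmax⟩ := chain_compact_max hsemi hcomp isClosed_closure hclch
    (hne.mono subset_closure)
  refine ⟨s, hs, fun c hc => hmax c (subset_closure hc), fun b hb => ?_⟩
  exact closure_minimal (fun c hc => hb c hc) (isClosed_Iic_t2 hsemi b) hs

/-- A nonempty closed inf-closed subset of `↓w` has a least element. -/
private lemma exists_min_closed_inf (hsemi : ∀ a : Y, Continuous fun t => a ⊓ t)
    (hdcc : ∀ x : Y, ∀ C : Set (Set.Iic x), IsClosed C → IsChain (· ≤ ·) C → IsCompact C)
    [T2Space Y] {w : Y} {T : Set Y} (hTw : T ⊆ Iic w) (hcl : IsClosed T) (hne : T.Nonempty)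
    (hinf : ∀ a ∈ T, ∀ b ∈ T, a ⊓ b ∈ T) :
    ∃ m ∈ T, ∀ t ∈ T, m ≤ t := by
  obtain ⟨t₀, ht₀⟩ := hne
  obtain ⟨M, hM1, hMmax⟩ :
      ∃ M, {t₀} ⊆ M ∧ Maximal (· ∈ {C : Set Y | C ⊆ T ∧ IsChain (· ≤ ·) C}) M := by
    exact zorn_subset_nonempty {C : Set Y | C ⊆ T ∧ IsChain (· ≤ ·) C}
      (fun c hc hchain hcne => by
        refine ⟨⋃₀ c, ⟨?_, ?_⟩, fun s hs => subset_sUnion_of_mem hs⟩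
        · exact sUnion_subset fun s hs => (hc hs).1
        · intro a ha b hb hab
          obtain ⟨Ca, hCa, haC⟩ := ha
          obtain ⟨Cb, hCb, hbC⟩ := hb
          rcases hchain.total hCa hCb with h | h
          · exact (hc hCb).2 (h haC) hbC hab
          · exact (hc hCa).2 haC (h hbC) hab)
      {t₀} ⟨singleton_subset_iff.2 ht₀, Set.Subsingleton.isChain subsingleton_singleton⟩
  have hMT : M ⊆ T := hMmax.1.1
  have hMch : IsChain (· ≤ ·) M := hMmax.1.2
  have hMne : M.Nonempty := ⟨t₀, hM1 rfl⟩
  have hDT : closure M ⊆ T := closure_minimal hMT hcl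
  have hDch := isChain_closure hsemi hMch
  have hcomp := compact_of_closed_chain hdcc (hDT.trans hTw) isClosed_closure hDch
  obtain ⟨m, hmD, hmmin⟩ := chain_compact_min hsemi hcomp isClosed_closure hDch
    (hMne.mono subset_closure)
  refine ⟨m, hDT hmD, fun t ht => ?_⟩
  by_contra hmt
  have huT : m ⊓ t ∈ T := hinf m (hDT hmD) t ht
  have hum : m ⊓ t ≤ m := inf_le_left
  have hune : m ⊓ t ≠ m := fun h => hmt (by rw [← h]; exact inf_le_right)
  have hchain' : IsChain (· ≤ ·) (insert (m ⊓ t) M) := by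
    apply hMch.insert
    intro c hc _
    exact Or.inl (hum.trans (hmmin c (subset_closure hc)))
  have heq : insert (m ⊓ t) M = M :=
    hMmax.eq_of_ge ⟨insert_subset huT hMT, hchain'⟩ (subset_insert _ _)
  have huM : m ⊓ t ∈ M := by rw [← heq]; exact mem_insert _ _
  exact hune (le_antisymm hum (hmmin _ (subset_closure huM)))

/-- FIP theorem: a family of closed subsemilattices whose finite subfamilies all meet `↓z`
has nonempty total intersection with `↓z`. -/
private lemma fip_subsemilattices (hsemi : ∀ a : Y, Continuous fun t => a ⊓ t)
    (hdcc : ∀ x : Y, ∀ C : Set (Set.Iic x), IsClosed C → IsChain (· ≤ ·) C → IsCompact C)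
    [T2Space Y] (z : Y) {ι : Type*} (S : ι → Set Y) (hcl : ∀ i, IsClosed (S i))
    (hsub : ∀ i, ∀ a ∈ S i, ∀ b ∈ S i, a ⊓ b ∈ S i)
    (hfip : ∀ G : Finset ι, (Iic z ∩ ⋂ i ∈ G, S i).Nonempty) :
    (Iic z ∩ ⋂ i, S i).Nonempty := by
  classical
  set Q : Y → Prop := fun p => ∀ G : Finset ι,
    ∃ u, u ≤ z ∧ (∀ i ∈ G, u ∈ S i) ∧ p ≤ u with hQdef
  set P : Set Y := {p | p ≤ z ∧ Q p} with hPdef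
  -- helper: mins of the auxiliary closed inf-closed sets
  have haux : ∀ (G : Finset ι) (p : Y), Q p →
      ∃ m, (m ≤ z ∧ (∀ i ∈ G, m ∈ S i) ∧ p ≤ m) ∧
        ∀ u, (u ≤ z ∧ (∀ i ∈ G, u ∈ S i) ∧ p ≤ u) → m ≤ u := by
    intro G p hQp
    have := exists_min_closed_inf hsemi hdcc (w := z)
      (T := Iic z ∩ (⋂ i ∈ G, S i) ∩ Ici p) ?_ ?_ ?_ ?_
    · obtain ⟨m, hm, hmin⟩ := this
      refine ⟨m, ⟨hm.1.1, fun i hi => mem_iInter₂.1 hm.1.2 i hi, hm.2⟩, ?_⟩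
      intro u hu
      exact hmin u ⟨⟨hu.1, mem_iInter₂.2 hu.2.1⟩, hu.2.2⟩
    · exact fun t ht => ht.1.1
    · exact ((isClosed_Iic_t2 hsemi z).inter (isClosed_biInter fun i _ => hcl i)).inter (isClosed_Ici_t1 hsemi p)
    · obtain ⟨u, hu1, hu2, hu3⟩ := hQp G
      exact ⟨u, ⟨hu1, mem_iInter₂.2 hu2⟩, hu3⟩
    · rintro a ⟨⟨haz, haS⟩, hap⟩ b ⟨⟨hbz, hbS⟩, hbp⟩
      refine ⟨⟨inf_le_of_left_le haz, mem_iInter₂.2 fun i hi => ?_⟩, le_inf hap hbp⟩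
      exact hsub i a (mem_iInter₂.1 haS i hi) b (mem_iInter₂.1 hbS i hi)
  -- bottom of Iic z
  obtain ⟨p₀, hp₀z, hp₀min⟩ := exists_min_closed_inf hsemi hdcc (w := z) (T := Iic z)
    (fun t ht => ht) (isClosed_Iic_t2 hsemi z) ⟨z, le_rfl⟩
    (fun a _ b _ => inf_le_of_left_le ‹a ≤ z›)
  have hp₀P : p₀ ∈ P := by
    refine ⟨hp₀z, fun G => ?_⟩
    obtain ⟨u, hu⟩ := hfip G
    exact ⟨u, hu.1, fun i hi => mem_iInter₂.1 hu.2 i hi, hp₀min u hu.1⟩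
  -- Zorn
  have hub : ∀ c ⊆ P, IsChain (· ≤ ·) c → ∀ y ∈ c, ∃ ub ∈ P, ∀ q ∈ c, q ≤ ub := by
    intro c hcP hchain y hyc
    · have hcz : c ⊆ Iic z := fun q hq => (hcP hq).1
      obtain ⟨s, hscl, hsub', hslub⟩ := chain_sup hsemi hdcc hcz hchain ⟨y, hyc⟩
      have hsz : s ≤ z := closure_minimal hcz (isClosed_Iic_t2 hsemi z) hscl
      refine ⟨s, ⟨hsz, fun G => ?_⟩, fun q hq => hsub' q hq⟩
      -- Q s : via sups of mins
      set mfun : Y → Y := fun q => if h : Q q then (haux G q h).choose else q with hmfun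
      have hmprop : ∀ q ∈ c, (mfun q ≤ z ∧ (∀ i ∈ G, mfun q ∈ S i) ∧ q ≤ mfun q) ∧
          ∀ u, (u ≤ z ∧ (∀ i ∈ G, u ∈ S i) ∧ q ≤ u) → mfun q ≤ u := by
        intro q hq
        have hQq : Q q := (hcP hq).2
        simp only [hmfun, dif_pos hQq]
        exact (haux G q hQq).choose_spec
      have hmono : ∀ q ∈ c, ∀ q' ∈ c, q ≤ q' → mfun q ≤ mfun q' := by
        intro q hq q' hq' hqq'
        exact (hmprop q hq).2 _ ⟨(hmprop q' hq').1.1, (hmprop q' hq').1.2.1,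
          hqq'.trans (hmprop q' hq').1.2.2⟩
      set D : Set Y := mfun '' c with hD
      have hDch : IsChain (· ≤ ·) D := by
        rintro - ⟨q, hq, rfl⟩ - ⟨q', hq', rfl⟩ -
        rcases hchain.total hq hq' with h | h
        · exact Or.inl (hmono q hq q' hq' h)
        · exact Or.inr (hmono q' hq' q hq h)
      have hDz : D ⊆ Iic z := by rintro - ⟨q, hq, rfl⟩; exact (hmprop q hq).1.1
      obtain ⟨u, hucl, huub, -⟩ := chain_sup hsemi hdcc hDz hDch ⟨mfun y, y, hyc, rfl⟩
      have hDF : D ⊆ Iic z ∩ ⋂ i ∈ G, S i := by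
        rintro - ⟨q, hq, rfl⟩
        exact ⟨(hmprop q hq).1.1, mem_iInter₂.2 (hmprop q hq).1.2.1⟩
      have hu' : u ∈ Iic z ∩ ⋂ i ∈ G, S i := closure_minimal hDF
        ((isClosed_Iic_t2 hsemi z).inter (isClosed_biInter fun i _ => hcl i)) hucl
      have hsu : s ≤ u := hslub u (fun q hq =>
        ((hmprop q hq).1.2.2).trans (huub _ ⟨q, hq, rfl⟩))
      exact ⟨u, hu'.1, fun i hi => mem_iInter₂.1 hu'.2 i hi, hsu⟩
  obtain ⟨p, hp₀p, hpP, hpmax⟩ :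
      ∃ p, p₀ ≤ p ∧ p ∈ P ∧ ∀ q ∈ P, p ≤ q → q = p := by
    obtain ⟨p, h1, h2⟩ := zorn_le_nonempty₀ P hub p₀ hp₀P
    exact ⟨p, h1, h2.1, fun q hq hpq => (h2.2 hq hpq).antisymm hpq⟩
  -- maximal element lies in every S i
  refine ⟨p, hpP.1, mem_iInter.2 fun i₀ => ?_⟩
  by_contra hni
  obtain ⟨p', hp'prop, hp'min⟩ := haux {i₀} p hpP.2
  have hp'i₀ : p' ∈ S i₀ := hp'prop.2.1 i₀ (Finset.mem_singleton_self i₀)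
  have hpp' : p ≤ p' := hp'prop.2.2
  have hp'P : p' ∈ P := by
    refine ⟨hp'prop.1, fun G => ?_⟩
    obtain ⟨u, hu1, hu2, hu3⟩ := hpP.2 (insert i₀ G)
    refine ⟨u, hu1, fun i hi => hu2 i (Finset.mem_insert_of_mem hi), ?_⟩
    exact hp'min u ⟨hu1, fun i hi => hu2 i (by
      rw [Finset.mem_singleton] at hi; rw [hi]; exact Finset.mem_insert_self i₀ G), hu3⟩
  have := hpmax p' hp'P hpp'
  rw [this] at hp'i₀
  exact hni hp'i₀

end StmtAux
section StmtAux2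

open Filter Topology

variable {Y : Type*} [SemilatticeInf Y] [TopologicalSpace Y]

/-- Every `𝒵`-open set is open in the original topology. -/
private lemma zar_le_orig {U : Set Y} (hU : @IsOpen Y (zarTop Y) U) : IsOpen U := by
  have hU' : TopologicalSpace.GenerateOpen
      {U : Set Y | ∃ S : Set Y, IsClosed S ∧ (∀ a ∈ S, ∀ b ∈ S, a ⊓ b ∈ S) ∧ U = Sᶜ} U := hU
  clear hU
  induction hU' with
  | basic s hs => obtain ⟨S, hScl, -, rfl⟩ := hs; exact hScl.isOpen_compl
  | univ => exact isOpen_univ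
  | inter u v _ _ ihu ihv => exact ihu.inter ihv
  | sUnion K _ ih => exact isOpen_sUnion ih

/-- Extraction of a finite subbasic neighborhood from a `generateFrom`-open set. -/
private lemma exists_finset_subbasic {g : Set (Set Y)} {U : Set Y}
    (hU : TopologicalSpace.GenerateOpen g U) :
    ∀ x ∈ U, ∃ F : Finset (Set Y), (∀ s ∈ F, s ∈ g) ∧ (∀ s ∈ F, x ∈ s) ∧
      (⋂ s ∈ F, s) ⊆ U := by
  classical
  induction hU with
  | basic s hs =>
      intro x hx
      refine ⟨{s}, by simpa using hs, by simpa using hx, by simp⟩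
  | univ => intro x _; exact ⟨∅, by simp, by simp, by simp⟩
  | inter u v _ _ ihu ihv =>
      intro x hx
      obtain ⟨Fu, h1, h2, h3⟩ := ihu x hx.1
      obtain ⟨Fv, g1, g2, g3⟩ := ihv x hx.2
      refine ⟨Fu ∪ Fv, ?_, ?_, ?_⟩
      · intro s hs; rcases Finset.mem_union.1 hs with h | h
        · exact h1 s h
        · exact g1 s h
      · intro s hs; rcases Finset.mem_union.1 hs with h | h
        · exact h2 s h
        · exact g2 s h
      · intro t ht
        have ht' := mem_iInter₂.1 ht
        constructor
        · exact h3 (mem_iInter₂.2 fun s hs => ht' s (Finset.mem_union_left _ hs))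
        · exact g3 (mem_iInter₂.2 fun s hs => ht' s (Finset.mem_union_right _ hs))
  | sUnion K _ ih =>
      intro x hx
      obtain ⟨s, hsK, hxs⟩ := hx
      obtain ⟨F, h1, h2, h3⟩ := ih s hsK x hxs
      exact ⟨F, h1, h2, h3.trans (subset_sUnion_of_mem hsK)⟩

/-- `↓z` is compact in the weak• topology (under `hdcc` and Hausdorffness). -/
private lemma zar_compact_Iic (hsemi : ∀ a : Y, Continuous fun t => a ⊓ t)
    (hdcc : ∀ x : Y, ∀ C : Set (Set.Iic x), IsClosed C → IsChain (· ≤ ·) C → IsCompact C)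
    [T2Space Y] (z : Y) : @IsCompact Y (zarTop Y) (Iic z) := by
  rw [@isCompact_iff_ultrafilter_le_nhds Y (zarTop Y)]
  intro F hF
  have hIic : Iic z ∈ F := le_principal_iff.1 hF
  have hfip : ∀ G : Finset {S : Set Y //
      (IsClosed S ∧ ∀ a ∈ S, ∀ b ∈ S, a ⊓ b ∈ S) ∧ S ∈ F},
      (Iic z ∩ ⋂ i ∈ G, i.1).Nonempty := by
    intro G
    apply Ultrafilter.nonempty_of_mem
    exact inter_mem hIic ((Filter.biInter_finset_mem G).2 fun i _ => i.2.2)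
  obtain ⟨q, hqz, hq⟩ := fip_subsemilattices hsemi hdcc z
    (fun i : {S : Set Y // (IsClosed S ∧ ∀ a ∈ S, ∀ b ∈ S, a ⊓ b ∈ S) ∧ S ∈ F} => i.1)
    (fun i => i.2.1.1) (fun i => i.2.1.2) hfip
  refine ⟨q, hqz, ?_⟩
  rw [zarTop, nhds_generateFrom]
  refine le_iInf fun s => le_iInf fun hs => ?_
  obtain ⟨hqs, S₀, hS₀cl, hS₀sub, rfl⟩ :
      q ∈ s ∧ ∃ S : Set Y, IsClosed S ∧ (∀ a ∈ S, ∀ b ∈ S, a ⊓ b ∈ S) ∧ s = Sᶜ := hs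
  rw [le_principal_iff]
  by_contra hcon
  have hS₀F : S₀ ∈ F := by
    have := (Ultrafilter.compl_notMem_iff (f := F) (s := S₀)).1 hcon
    exact this
  have hqS₀ : q ∈ S₀ := mem_iInter.1 hq ⟨S₀, ⟨hS₀cl, hS₀sub⟩, hS₀F⟩
  exact hqs hqS₀

end StmtAux2
section StmtAux3

open Filter Topology

variable {Y : Type*} [SemilatticeInf Y] [TopologicalSpace Y]

/-- KEY LEMMA: if a neighborhood of `x` is covered by finitely many closed subsemilattices,
then some point of their union below `x` has `x` in the interior of its upper cone. -/
private lemma claimL (hsemi : ∀ a : Y, Continuous fun t => a ⊓ t)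
    (hdcc : ∀ x : Y, ∀ C : Set (Set.Iic x), IsClosed C → IsChain (· ≤ ·) C → IsCompact C)
    [T2Space Y] {ι : Type*} [Fintype ι] (S : ι → Set Y) (hcl : ∀ i, IsClosed (S i))
    (hsub : ∀ i, ∀ a ∈ S i, ∀ b ∈ S i, a ⊓ b ∈ S i)
    {x : Y} {V : Set Y} (hV : IsOpen V) (hxV : x ∈ V) (hVS : V ⊆ ⋃ i, S i) :
    ∃ v, v ≤ x ∧ (∃ i, v ∈ S i) ∧ x ∈ interior (Ici v) := by
  classical
  by_contra hF
  push_neg at hF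
  set K : Set Y := {u | u ∈ V ∧ u ≤ x ∧ ∃ i, u ∈ S i} with hK
  have hxK : x ∈ K := ⟨hxV, le_rfl, mem_iUnion.1 (hVS hxV)⟩
  set pat : Y → Finset ι := fun u => Finset.univ.filter (fun i => u ∈ S i) with hpat
  have hpatmem : ∀ u i, i ∈ pat u ↔ u ∈ S i := by
    intro u i; simp [hpat]
  set cards : Set ℕ := {n | ∃ u ∈ K, (pat u).card = n} with hcards
  have hcne : cards.Nonempty := ⟨(pat x).card, x, hxK, rfl⟩
  obtain ⟨s₀, hs₀K, hs₀card⟩ : ∃ u ∈ K, (pat u).card = sInf cards := Nat.sInf_mem hcne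
  have hP0ne : ∃ i₀, i₀ ∈ pat s₀ := by
    obtain ⟨i, hi⟩ := hs₀K.2.2
    exact ⟨i, (hpatmem s₀ i).2 hi⟩
  obtain ⟨i₀, hi₀⟩ := hP0ne
  -- the minimum of the intersection subsemilattice over the pattern of s₀
  obtain ⟨m₀, hm₀mem, hm₀min⟩ :
      ∃ m ∈ (⋂ i ∈ pat s₀, S i) ∩ Iic x, ∀ t ∈ (⋂ i ∈ pat s₀, S i) ∩ Iic x, m ≤ t := by
    apply exists_min_closed_inf hsemi hdcc (w := x)
    · exact fun t ht => ht.2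
    · exact ((isClosed_biInter fun i _ => hcl i).inter (isClosed_Iic_t2 hsemi x))
    · exact ⟨s₀, mem_iInter₂.2 fun i hi => (hpatmem s₀ i).1 hi, hs₀K.2.1⟩
    · rintro a ⟨haS, hax⟩ b ⟨hbS, hbx⟩
      exact ⟨mem_iInter₂.2 fun i hi =>
        hsub i a (mem_iInter₂.1 haS i hi) b (mem_iInter₂.1 hbS i hi),
        inf_le_of_left_le hax⟩
  have hm₀x : m₀ ≤ x := hm₀mem.2
  have hm₀S : ∃ i, m₀ ∈ S i := ⟨i₀, mem_iInter₂.1 hm₀mem.1 i₀ hi₀⟩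
  have hnint : x ∉ interior (Ici m₀) := hF m₀ hm₀x hm₀S
  have hxcl : x ∈ closure ((Ici m₀)ᶜ) := by
    rw [closure_compl]
    exact hnint
  haveI hNB : (𝓝[(Ici m₀)ᶜ] x).NeBot := mem_closure_iff_nhdsWithin_neBot.1 hxcl
  set g : Y → Y := fun t => s₀ ⊓ (x ⊓ t) with hg
  have hgc : Continuous g := (hsemi s₀).comp (hsemi x)
  have hgx : g x = s₀ := by
    simp only [hg, inf_idem]
    exact inf_eq_left.2 hs₀K.2.1
  have hT : Tendsto g (𝓝[(Ici m₀)ᶜ] x) (𝓝 s₀) := by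
    have h1 : Tendsto g (𝓝 x) (𝓝 s₀) := by
      have := hgc.tendsto x
      rwa [hgx] at this
    exact h1.mono_left nhdsWithin_le_nhds
  have hev : ∀ᶠ t in 𝓝[(Ici m₀)ᶜ] x, g t ∈ K := by
    have h1 : ∀ᶠ t in 𝓝[(Ici m₀)ᶜ] x, g t ∈ V := hT (hV.mem_nhds hs₀K.1)
    filter_upwards [h1] with t ht
    refine ⟨ht, inf_le_of_right_le inf_le_left, mem_iUnion.1 (hVS ht)⟩
  -- pigeonhole on patterns
  have hfreq : ∃ PP : Finset ι, ∃ᶠ t in 𝓝[(Ici m₀)ᶜ] x, g t ∈ K ∧ pat (g t) = PP := by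
    by_contra hno
    push_neg at hno
    have hall : ∀ᶠ t in 𝓝[(Ici m₀)ᶜ] x, ∀ PP : Finset ι, ¬(g t ∈ K ∧ pat (g t) = PP) := by
      rw [eventually_all]
      intro PP
      have := hno PP
      exact this.mono fun t ht h => ht h.1 h.2
    obtain ⟨t, htK, htall⟩ := (hev.and hall).exists
    exact htall (pat (g t)) ⟨htK, rfl⟩
  obtain ⟨PP, hPfreq⟩ := hfreq
  -- PP ⊆ pat s₀
  have hsub₀ : PP ⊆ pat s₀ := by
    intro i hi
    have hfr : ∃ᶠ t in 𝓝[(Ici m₀)ᶜ] x, g t ∈ S i := by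
      apply hPfreq.mono
      rintro t ⟨-, hte⟩
      have : i ∈ pat (g t) := by rw [hte]; exact hi
      exact (hpatmem _ i).1 this
    have : s₀ ∈ closure (S i) := mem_closure_of_frequently_of_tendsto hfr hT
    rw [(hcl i).closure_eq] at this
    exact (hpatmem s₀ i).2 this
  -- cardinality forces equality
  have hPeq : PP = pat s₀ := by
    apply Finset.eq_of_subset_of_card_le hsub₀
    obtain ⟨t, htK, hte⟩ := hPfreq.exists
    have h1 : sInf cards ≤ (pat (g t)).card := Nat.sInf_le ⟨g t, htK, rfl⟩
    rw [hte] at h1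
    rw [hs₀card]
    exact h1
  -- final contradiction
  have hmemA : ∀ᶠ t in 𝓝[(Ici m₀)ᶜ] x, t ∈ (Ici m₀)ᶜ := eventually_mem_nhdsWithin
  obtain ⟨t, ⟨htK, hte⟩, htA⟩ := (hPfreq.and_eventually hmemA).exists
  have hgT : g t ∈ (⋂ i ∈ pat s₀, S i) ∩ Iic x := by
    constructor
    · refine mem_iInter₂.2 fun i hi => ?_
      have : i ∈ pat (g t) := by rw [hte, hPeq]; exact hi
      exact (hpatmem _ i).1 this
    · exact inf_le_of_right_le inf_le_left
  have h1 : m₀ ≤ g t := hm₀min _ hgT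
  have h2 : g t ≤ t := inf_le_of_right_le inf_le_right
  exact htA (h1.trans h2)

end StmtAux3
section StmtAux4

open Filter Topology

variable {Y : Type*} [SemilatticeInf Y] [TopologicalSpace Y]

/-- 𝒵τ-separation implies the V-semilattice property (given `hdcc`). -/
private lemma V_of_sep (hsemi : ∀ a : Y, Continuous fun t => a ⊓ t)
    (hdcc : ∀ x : Y, ∀ C : Set (Set.Iic x), IsClosed C → IsChain (· ≤ ·) C → IsCompact C)
    (h2 : ∀ x y : Y, x ≠ y → ∃ Ox Oy : Set Y, @IsOpen Y (zarTop Y) Ox ∧ IsOpen Oy ∧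
      x ∈ Ox ∧ y ∈ Oy ∧ Disjoint Ox Oy) :
    ∀ x y : Y, ¬ x ≤ y → ∃ v : Y, v ∉ Set.Iic y ∧ x ∈ interior (Set.Ici v) := by
  classical
  haveI ht2 : T2Space Y := by
    refine ⟨fun a b hab => ?_⟩
    obtain ⟨Oa, Ob, hOa, hOb, ha, hb, hd⟩ := h2 a b hab
    exact ⟨Oa, Ob, zar_le_orig hOa, hOb, ha, hb, hd⟩
  intro x y hxy
  set z := x ⊓ y with hz
  -- separation data for each point below z
  have key : ∀ u : Y, u ≤ z → ∃ (F : Finset (Set Y)) (W : Set Y),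
      (∀ T ∈ F, IsClosed T ∧ ∀ a ∈ T, ∀ b ∈ T, a ⊓ b ∈ T) ∧ IsOpen W ∧ x ∈ W ∧
      (∀ T ∈ F, u ∉ T) ∧ (∀ t ∈ W, ∃ T ∈ F, t ∈ T) := by
    intro u hu
    have hune : u ≠ x := by
      rintro rfl
      exact hxy (hu.trans inf_le_right)
    obtain ⟨Ou, Wx, hOu, hWx, huO, hxW, hd⟩ := h2 u x hune
    have hOu' : TopologicalSpace.GenerateOpen
        {U : Set Y | ∃ S : Set Y, IsClosed S ∧ (∀ a ∈ S, ∀ b ∈ S, a ⊓ b ∈ S) ∧ U = Sᶜ}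
        Ou := hOu
    obtain ⟨Fs, hFsg, huF, hFO⟩ := exists_finset_subbasic hOu' u huO
    refine ⟨Fs.image compl, Wx, ?_, hWx, hxW, ?_, ?_⟩
    · intro T hT
      obtain ⟨s, hs, rfl⟩ := Finset.mem_image.1 hT
      obtain ⟨S', hS'cl, hS'sub, rfl⟩ := hFsg s hs
      rw [compl_compl]
      exact ⟨hS'cl, hS'sub⟩
    · intro T hT
      obtain ⟨s, hs, rfl⟩ := Finset.mem_image.1 hT
      obtain ⟨S', hS'cl, hS'sub, rfl⟩ := hFsg s hs
      rw [compl_compl]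
      intro huS'
      exact (huF _ hs) huS'
    · intro t ht
      have htOu : t ∉ Ou := fun h => (hd.ne_of_mem h ht) rfl
      have : t ∉ ⋂ s ∈ Fs, s := fun h => htOu (hFO h)
      obtain ⟨s, hs, hts⟩ : ∃ s ∈ Fs, t ∉ s := by
        by_contra hcon
        push_neg at hcon
        exact this (mem_iInter₂.2 hcon)
      exact ⟨sᶜ, Finset.mem_image_of_mem compl hs, hts⟩
  choose Fc Wc hFcprop hWcopen hxWc hFcnot hWccov using key
  -- compactness of ↓z in the weak• topology, and a finite subcover
  set B : {u : Y // u ≤ z} → Set Y := fun u => ⋂ T ∈ Fc u.1 u.2, Tᶜ with hB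
  have hBopen : ∀ u, @IsOpen Y (zarTop Y) (B u) := by
    intro u
    apply @Set.Finite.isOpen_biInter Y _ (zarTop Y) _ _ (Fc u.1 u.2).finite_toSet
    intro T hT
    exact TopologicalSpace.isOpen_generateFrom_of_mem
      ⟨T, (hFcprop u.1 u.2 T hT).1, (hFcprop u.1 u.2 T hT).2, rfl⟩
  have hcover : Iic z ⊆ ⋃ u : {u : Y // u ≤ z}, B u := by
    intro u hu
    exact mem_iUnion.2 ⟨⟨u, hu⟩, mem_iInter₂.2 fun T hT => hFcnot u hu T hT⟩
  obtain ⟨I, hI⟩ := @IsCompact.elim_finite_subcover Y (zarTop Y) (Iic z) _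
    (zar_compact_Iic hsemi hdcc z) B hBopen hcover
  -- the open neighborhood of x and the covering family of closed subsemilattices
  set W : Set Y := ⋂ u ∈ I, Wc u.1 u.2 with hW
  have hWopen : IsOpen W := isOpen_biInter_finset fun u _ => hWcopen u.1 u.2
  have hxWmem : x ∈ W := mem_iInter₂.2 fun u _ => hxWc u.1 u.2
  -- selector type
  set Φ : Type _ := (u : {v // v ∈ I}) → {T : Set Y // T ∈ Fc u.1.1 u.1.2} with hΦ
  haveI : Fintype Φ := by
    apply Pi.instFintype
  set SS : Φ → Set Y := fun φ => ⋂ u : {v // v ∈ I}, (φ u).1 with hSS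
  have hSScl : ∀ φ, IsClosed (SS φ) :=
    fun φ => isClosed_iInter fun u => (hFcprop u.1.1 u.1.2 _ (φ u).2).1
  have hSSsub : ∀ φ, ∀ a ∈ SS φ, ∀ b ∈ SS φ, a ⊓ b ∈ SS φ := by
    intro φ a ha b hb
    exact mem_iInter.2 fun u => (hFcprop u.1.1 u.1.2 _ (φ u).2).2
      a (mem_iInter.1 ha u) b (mem_iInter.1 hb u)
  have hWSS : W ⊆ ⋃ φ, SS φ := by
    intro w hw
    have hchoice : ∀ u : {v // v ∈ I}, ∃ T ∈ Fc u.1.1 u.1.2, w ∈ T :=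
      fun u => hWccov u.1.1 u.1.2 w (mem_iInter₂.1 hw u.1 u.2)
    choose f hf1 hf2 using hchoice
    exact mem_iUnion.2 ⟨fun u => ⟨f u, hf1 u⟩, mem_iInter.2 fun u => hf2 u⟩
  -- apply the key lemma
  obtain ⟨v, hvx, ⟨φ, hvφ⟩, hvint⟩ := claimL hsemi hdcc SS hSScl hSSsub hWopen hxWmem hWSS
  refine ⟨v, ?_, hvint⟩
  -- v ∉ ↓y
  intro hvy
  have hvz : v ≤ z := le_inf hvx hvy
  obtain ⟨u, hu⟩ := mem_iUnion.1 (hI (show v ∈ Iic z from hvz))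
  obtain ⟨hum, huB⟩ := mem_iUnion.1 hu
  -- v ∈ B u : v avoids all members of Fc u, but v ∈ SS φ ⊆ some member
  have : v ∈ (φ ⟨u, hum⟩).1 := mem_iInter.1 hvφ ⟨u, hum⟩
  exact (mem_iInter₂.1 huB _ (φ ⟨u, hum⟩).2) this

/-- The complement of the interior of an upper cone is a subsemilattice. -/
private lemma compl_interior_Ici_subsemilattice (hsemi : ∀ a : Y, Continuous fun t => a ⊓ t)
    (v : Y) : ∀ a ∈ (interior (Ici v))ᶜ, ∀ b ∈ (interior (Ici v))ᶜ,
      a ⊓ b ∈ (interior (Ici v))ᶜ := by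
  intro a ha b hb hab
  apply ha
  have hN : IsOpen ((fun t => t ⊓ b) ⁻¹' interior (Ici v)) :=
    isOpen_interior.preimage (contR hsemi b)
  have haN : a ∈ (fun t => t ⊓ b) ⁻¹' interior (Ici v) := hab
  have hsub : (fun t : Y => t ⊓ b) ⁻¹' interior (Ici v) ⊆ Ici v := by
    intro t ht
    have : v ≤ t ⊓ b := interior_subset ht
    exact this.trans inf_le_left
  exact mem_interior.2 ⟨_, hsub, hN, haN⟩

/-- A T1 V-semilattice has Hausdorff weak• topology. -/
private lemma zar_t2_of_V (hsemi : ∀ a : Y, Continuous fun t => a ⊓ t) [T1Space Y]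
    (hV : ∀ x y : Y, ¬ x ≤ y → ∃ v : Y, v ∉ Set.Iic y ∧ x ∈ interior (Set.Ici v)) :
    @T2Space Y (zarTop Y) := by
  have main : ∀ p q : Y, ¬ p ≤ q → ∃ U V : Set Y, @IsOpen Y (zarTop Y) U ∧
      @IsOpen Y (zarTop Y) V ∧ p ∈ U ∧ q ∈ V ∧ Disjoint U V := by
    intro p q hpq
    obtain ⟨v, hvq, hpint⟩ := hV p q hpq
    refine ⟨interior (Ici v), (Ici v)ᶜ, ?_, ?_, hpint, hvq, ?_⟩
    · have : interior (Ici v) = ((interior (Ici v))ᶜ)ᶜ := (compl_compl _).symm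
      rw [this]
      exact TopologicalSpace.isOpen_generateFrom_of_mem
        ⟨(interior (Ici v))ᶜ, isOpen_interior.isClosed_compl,
          compl_interior_Ici_subsemilattice hsemi v, rfl⟩
    · exact TopologicalSpace.isOpen_generateFrom_of_mem
        ⟨Ici v, isClosed_Ici_t1 hsemi v,
          fun a ha b hb => le_inf ha hb, rfl⟩
    · exact disjoint_compl_right.mono_left interior_subset
  refine @T2Space.mk Y (zarTop Y) (fun a b hab => ?_)
  have h : ¬ a ≤ b ∨ ¬ b ≤ a := by
    by_contra hcon
    push_neg at hcon
    exact hab (le_antisymm hcon.1 hcon.2)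
  rcases h with h | h
  · exact main a b h
  · obtain ⟨U, V, hU, hV', hbU, haV, hd⟩ := main b a h
    exact ⟨V, U, hV', hU, haV, hbU, hd.symm⟩

end StmtAux4
/-- For a ↓-chain-compact semitopological semilattice `X` the following are
equivalent: (1) the weak• topology `𝒵_X` is Hausdorff; (2) `X` is 𝒵τ-separated: distinct
points have disjoint neighborhoods, one `𝒵_X`-open and the other open in the original
topology; (3) `X` is a V-semilattice satisfying the separation axiom T1. -/
theorem stmt17 {X : Type*} [SemilatticeInf X] [TopologicalSpace X]
    (hsemi : ∀ a : X, Continuous fun x => a ⊓ x)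
    (hdcc : ∀ x : X, ∀ C : Set (Set.Iic x), IsClosed C → IsChain (· ≤ ·) C → IsCompact C) :
    List.TFAE
      [@T2Space X (zarTop X),
       ∀ x y : X, x ≠ y → ∃ Ox Oy : Set X, @IsOpen X (zarTop X) Ox ∧ IsOpen Oy ∧
         x ∈ Ox ∧ y ∈ Oy ∧ Disjoint Ox Oy,
       (∀ x y : X, ¬ x ≤ y → ∃ v : X, v ∉ Set.Iic y ∧ x ∈ interior (Set.Ici v)) ∧
         T1Space X] := by
  tfae_have 1 → 2 := by
    intro h1 x y hxy
    obtain ⟨u, v, hu, hv, hxu, hyv, hd⟩ := @t2_separation X (zarTop X) h1 x y hxy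
    exact ⟨u, v, hu, zar_le_orig hv, hxu, hyv, hd⟩
  tfae_have 2 → 3 := by
    intro h2
    haveI ht2 : T2Space X := by
      refine ⟨fun a b hab => ?_⟩
      obtain ⟨Oa, Ob, hOa, hOb, ha, hb, hd⟩ := h2 a b hab
      exact ⟨Oa, Ob, zar_le_orig hOa, hOb, ha, hb, hd⟩
    exact ⟨V_of_sep hsemi hdcc h2, inferInstance⟩
  tfae_have 3 → 1 := by
    rintro ⟨hV, ht1⟩
    exact zar_t2_of_V hsemi hV
  tfae_finish
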